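/- arXiv:1002.0387 — 2 statements merged into one kernel-verified Lean document; each statement's English description precedes it below -/
import Mathlib

section
/- Let U₁(z,·), U₂(z,·), V₁(z,·), V₂(z,·) be ℂ^{m×m}-valued sequences on ℤ satisfying, for a fixed z ∈ ℂ \ {0} and all k ∈ ℤ, the recursion (Uⱼ(z,k); Vⱼ(z,k)) = T(z,k)(Uⱼ(z,k-1); Vⱼ(z,k-1)), j = 1,2, where T(z,k) is the CMV transfer matrix built from Verblunsky coefficients αₖ with ‖αₖ‖ < 1. Then the Wronskian W(k) = ((-1)^{k+1}/2)[U₁(1/z̄,k)* U₂(z,k) - V₁(1/z̄,k)* V₂(z,k)] is independent of k. -/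
open Matrix
open scoped Matrix.Norms.L2Operator ComplexOrder

/-- The positive semidefinite square root of a positive semidefinite matrix
(removed from Mathlib; restored with its old definition). -/
noncomputable def Matrix.PosSemidef.sqrt {n 𝕜 : Type*} [Fintype n] [RCLike 𝕜] [DecidableEq n]
    {A : Matrix n n 𝕜} (hA : A.PosSemidef) : Matrix n n 𝕜 :=
  hA.1.eigenvectorUnitary.1 * diagonal ((↑) ∘ (√·) ∘ hA.1.eigenvalues) *
  (star hA.1.eigenvectorUnitary : Matrix n n 𝕜)

private lemma stmt5.sqrt_mul_self {n : ℕ} {M : Matrix (Fin n) (Fin n) ℂ} (hM : M.PosSemidef) :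
    hM.sqrt * hM.sqrt = M := by
  conv_rhs => rw [hM.1.spectral_theorem, Unitary.conjStarAlgAut_apply]
  simp only [Matrix.PosSemidef.sqrt]
  have hU : (star hM.1.eigenvectorUnitary : Matrix (Fin n) (Fin n) ℂ) *
      hM.1.eigenvectorUnitary.1 = 1 := Unitary.coe_star_mul_self _
  rw [show ∀ A B C D E F : Matrix (Fin n) (Fin n) ℂ, A * B * C * (D * E * F)
    = A * B * (C * D) * E * F from fun A B C D E F => by simp only [mul_assoc], hU, mul_one,
    mul_assoc _ (diagonal _) (diagonal _), diagonal_mul_diagonal]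
  congr 3
  funext i
  simp only [Function.comp_apply]
  rw [← RCLike.ofReal_mul, Real.mul_self_sqrt (hM.eigenvalues_nonneg i)]

private lemma stmt5.sqrt_isHermitian {n : ℕ} {M : Matrix (Fin n) (Fin n) ℂ} (hM : M.PosSemidef) :
    hM.sqrt.IsHermitian := by
  simp only [Matrix.PosSemidef.sqrt, IsHermitian, conjTranspose_mul, diagonal_conjTranspose,
    mul_assoc]
  rw [← star_eq_conjTranspose, ← star_eq_conjTranspose, star_star]
  congr 3
  funext i
  simp

private lemma stmt5.unit1 {n : ℕ} {a : Matrix (Fin n) (Fin n) ℂ} (hα : ‖a‖ < 1) :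
    IsUnit (1 - aᴴ * a) := by
  have h : ‖aᴴ * a‖ < 1 := by
    rw [Matrix.l2_opNorm_conjTranspose_mul_self]
    nlinarith [norm_nonneg a]
  exact (Units.oneSub _ h).isUnit

private lemma stmt5.unit2 {n : ℕ} {a : Matrix (Fin n) (Fin n) ℂ} (hα : ‖a‖ < 1) :
    IsUnit (1 - a * aᴴ) := by
  have h : ‖a * aᴴ‖ < 1 := by
    have := Matrix.l2_opNorm_conjTranspose_mul_self aᴴ
    rw [conjTranspose_conjTranspose, Matrix.l2_opNorm_conjTranspose] at this
    rw [this]; nlinarith [norm_nonneg a]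
  exact (Units.oneSub _ h).isUnit

private lemma stmt5.sqrt_unit_det {n : ℕ} {M : Matrix (Fin n) (Fin n) ℂ} (hM : M.PosSemidef)
    (hu : IsUnit M) : IsUnit hM.sqrt.det := by
  have h : hM.sqrt.det * hM.sqrt.det = M.det := by
    rw [← Matrix.det_mul, stmt5.sqrt_mul_self hM]
  have hd : IsUnit (hM.sqrt.det * hM.sqrt.det) := by
    rw [h]; exact (Matrix.isUnit_iff_isUnit_det M).mp hu
  exact isUnit_of_mul_isUnit_left hd

private lemma stmt5.inv_sq_mul {n : ℕ} {M : Matrix (Fin n) (Fin n) ℂ} (hM : M.PosSemidef)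
    (hu : IsUnit M) :
    (hM.sqrt⁻¹ * hM.sqrt⁻¹) * M = 1 ∧ M * (hM.sqrt⁻¹ * hM.sqrt⁻¹) = 1 := by
  have hd := stmt5.sqrt_unit_det hM hu
  constructor
  · have key : hM.sqrt⁻¹ * hM.sqrt⁻¹ * (hM.sqrt * hM.sqrt) = 1 := by
      rw [mul_assoc, ← mul_assoc hM.sqrt⁻¹ hM.sqrt hM.sqrt, nonsing_inv_mul _ hd, one_mul,
        nonsing_inv_mul _ hd]
    rwa [stmt5.sqrt_mul_self hM] at key
  · have key : hM.sqrt * hM.sqrt * (hM.sqrt⁻¹ * hM.sqrt⁻¹) = 1 := by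
      rw [mul_assoc, ← mul_assoc hM.sqrt hM.sqrt⁻¹ hM.sqrt⁻¹, mul_nonsing_inv _ hd, one_mul,
        mul_nonsing_inv _ hd]
    rwa [stmt5.sqrt_mul_self hM] at key

private lemma stmt5.intertwine {n : ℕ} (a X Y : Matrix (Fin n) (Fin n) ℂ)
    (hX1 : (1 - aᴴ * a) * X = 1) (hY2 : Y * (1 - a * aᴴ) = 1) : a * X = Y * a := by
  have key : a * (1 - aᴴ * a) = (1 - a * aᴴ) * a := by noncomm_ring
  have h : (1 - a * aᴴ) * (a * X) = a := by
    rw [← mul_assoc, ← key, mul_assoc, hX1, mul_one]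
  calc a * X = (Y * (1 - a * aᴴ)) * (a * X) := by rw [hY2, one_mul]
    _ = Y * ((1 - a * aᴴ) * (a * X)) := by rw [mul_assoc]
    _ = Y * a := by rw [h]

private lemma stmt5.cancelSub {n : ℕ} (c Y : Matrix (Fin n) (Fin n) ℂ)
    (hY2 : Y * (1 - c) = 1) : ∀ t, Y * (c * t) = Y * t - t := by
  intro t
  have hAux : Y * ((1 - c) * t) = t := by rw [← mul_assoc, hY2, one_mul]
  calc Y * (c * t) = Y * t - (Y * t - Y * (c * t)) := by abel
    _ = Y * t - Y * ((1 - c) * t) := by rw [sub_mul, one_mul, mul_sub]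
    _ = Y * t - t := by rw [hAux]

private lemma stmt5.algOdd {n : ℕ} (z : ℂ) (hz : z ≠ 0)
    (a p q X Y A₁ B₁ A₂ B₂ : Matrix (Fin n) (Fin n) ℂ)
    (hpH : pᴴ = p) (hqH : qᴴ = q)
    (hp : ∀ t, p * (p * t) = Y * t) (hq : ∀ t, q * (q * t) = X * t)
    (haX : ∀ t, a * (X * t) = Y * (a * t)) (haY : ∀ t, aᴴ * (Y * t) = X * (aᴴ * t))
    (e1 : ∀ t, Y * (a * (aᴴ * t)) = Y * t - t) (e2 : ∀ t, X * (aᴴ * (a * t)) = X * t - t) :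
    (p * (a * A₁) + (starRingEnd ℂ z)⁻¹ • (p * B₁))ᴴ * (p * (a * A₂) + z • (p * B₂))
      - ((starRingEnd ℂ z) • (q * A₁) + q * (aᴴ * B₁))ᴴ * (z⁻¹ • (q * A₂) + q * (aᴴ * B₂))
      = -(A₁ᴴ * A₂ - B₁ᴴ * B₂) := by
  simp only [conjTranspose_add, conjTranspose_smul, conjTranspose_mul,
    conjTranspose_conjTranspose, hpH, hqH, starRingEnd_apply, star_inv₀, star_star]
  simp only [add_mul, mul_add, smul_mul_assoc, mul_smul_comm, smul_smul, mul_assoc,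
    inv_mul_cancel₀ hz, mul_inv_cancel₀ hz, one_smul]
  simp only [hp, hq, haX, haY, e1, e2]
  simp only [mul_sub, smul_sub, smul_add, smul_smul, inv_mul_cancel₀ hz,
    mul_inv_cancel₀ hz, one_smul]
  abel

private lemma stmt5.algEven {n : ℕ}
    (a p q X Y A₁ B₁ A₂ B₂ : Matrix (Fin n) (Fin n) ℂ)
    (hpH : pᴴ = p) (hqH : qᴴ = q)
    (hp : ∀ t, p * (p * t) = Y * t) (hq : ∀ t, q * (q * t) = X * t)
    (haX : ∀ t, a * (X * t) = Y * (a * t)) (haY : ∀ t, aᴴ * (Y * t) = X * (aᴴ * t))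
    (e1 : ∀ t, Y * (a * (aᴴ * t)) = Y * t - t) (e2 : ∀ t, X * (aᴴ * (a * t)) = X * t - t) :
    (q * (aᴴ * A₁) + q * B₁)ᴴ * (q * (aᴴ * A₂) + q * B₂)
      - (p * A₁ + p * (a * B₁))ᴴ * (p * A₂ + p * (a * B₂))
      = -(A₁ᴴ * A₂ - B₁ᴴ * B₂) := by
  simp only [conjTranspose_add, conjTranspose_mul, conjTranspose_conjTranspose, hpH, hqH]
  simp only [add_mul, mul_add, mul_assoc]
  simp only [hp, hq, haX, haY, e1, e2]
  simp only [mul_sub]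
  abel

/-- The CMV transfer matrix `T(z,k)`: the 'odd' form for `k` odd and the 'even' form
for `k` even, built from Verblunsky coefficients `α k` with `ρ k = (I - (α k)* α k)^{1/2}`,
`ρ̃ k = (I - α k (α k)*)^{1/2}`. -/
noncomputable def cmvTransfer {m : ℕ} (α : ℤ → Matrix (Fin m) (Fin m) ℂ)
    (h1 : ∀ k, (1 - (α k)ᴴ * α k).PosSemidef) (h2 : ∀ k, (1 - α k * (α k)ᴴ).PosSemidef)
    (z : ℂ) (k : ℤ) : Matrix (Fin m ⊕ Fin m) (Fin m ⊕ Fin m) ℂ :=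
  if Odd k then
    Matrix.fromBlocks ((h2 k).sqrt⁻¹ * α k) (z • (h2 k).sqrt⁻¹)
      (z⁻¹ • (h1 k).sqrt⁻¹) ((h1 k).sqrt⁻¹ * (α k)ᴴ)
  else
    Matrix.fromBlocks ((h1 k).sqrt⁻¹ * (α k)ᴴ) ((h1 k).sqrt⁻¹)
      ((h2 k).sqrt⁻¹) ((h2 k).sqrt⁻¹ * α k)

/-- if `(U₁,V₁)` satisfies the CMV transfer recursion at `1/z̄` and `(U₂,V₂)`
satisfies it at `z`, then the Wronskian
`W(k) = ((-1)^(k+1)/2)[U₁(1/z̄,k)* U₂(z,k) - V₁(1/z̄,k)* V₂(z,k)]` is independent of `k`. -/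
theorem stmt5 {m : ℕ} (α : ℤ → Matrix (Fin m) (Fin m) ℂ) (hα : ∀ k, ‖α k‖ < 1)
    (h1 : ∀ k, (1 - (α k)ᴴ * α k).PosSemidef) (h2 : ∀ k, (1 - α k * (α k)ᴴ).PosSemidef)
    (z : ℂ) (hz : z ≠ 0)
    (U₁ V₁ U₂ V₂ : ℤ → Matrix (Fin m) (Fin m) ℂ)
    (hrec1 : ∀ k : ℤ, Matrix.fromRows (U₁ k) (V₁ k)
      = cmvTransfer α h1 h2 ((starRingEnd ℂ z)⁻¹) k * Matrix.fromRows (U₁ (k - 1)) (V₁ (k - 1)))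
    (hrec2 : ∀ k : ℤ, Matrix.fromRows (U₂ k) (V₂ k)
      = cmvTransfer α h1 h2 z k * Matrix.fromRows (U₂ (k - 1)) (V₂ (k - 1))) :
    ∀ k k' : ℤ,
      ((-1 : ℂ) ^ (k + 1) / 2) • ((U₁ k)ᴴ * U₂ k - (V₁ k)ᴴ * V₂ k)
        = ((-1 : ℂ) ^ (k' + 1) / 2) • ((U₁ k')ᴴ * U₂ k' - (V₁ k')ᴴ * V₂ k') := by
  have step : ∀ k : ℤ, (U₁ k)ᴴ * U₂ k - (V₁ k)ᴴ * V₂ k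
      = -((U₁ (k-1))ᴴ * U₂ (k-1) - (V₁ (k-1))ᴴ * V₂ (k-1)) := by
    intro k
    have hu1 := stmt5.unit1 (hα k)
    have hu2 := stmt5.unit2 (hα k)
    obtain ⟨hXl, hXr⟩ := stmt5.inv_sq_mul (h1 k) hu1
    obtain ⟨hYl, hYr⟩ := stmt5.inv_sq_mul (h2 k) hu2
    set a := α k with ha
    set q := (h1 k).sqrt⁻¹ with hqdef
    set p := (h2 k).sqrt⁻¹ with hpdef
    have hqH : qᴴ = q := (stmt5.sqrt_isHermitian (h1 k)).inv
    have hpH : pᴴ = p := (stmt5.sqrt_isHermitian (h2 k)).inv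
    have haX0 : a * (q * q) = (p * p) * a := stmt5.intertwine a (q * q) (p * p) hXr hYl
    have haY0 : aᴴ * (p * p) = (q * q) * aᴴ := by
      have h := congrArg conjTranspose haX0
      simp only [conjTranspose_mul, hqH, hpH] at h
      exact h.symm
    have haX : ∀ t, a * ((q * q) * t) = (p * p) * (a * t) := fun t => by
      rw [← mul_assoc, haX0, mul_assoc]
    have haY : ∀ t, aᴴ * ((p * p) * t) = (q * q) * (aᴴ * t) := fun t => by
      rw [← mul_assoc, haY0, mul_assoc]
    have e1 : ∀ t, (p * p) * (a * (aᴴ * t)) = (p * p) * t - t := fun t => by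
      have h := stmt5.cancelSub (a * aᴴ) (p * p) hYl t
      rwa [mul_assoc a aᴴ t] at h
    have e2 : ∀ t, (q * q) * (aᴴ * (a * t)) = (q * q) * t - t := fun t => by
      have h := stmt5.cancelSub (aᴴ * a) (q * q) hXl t
      rwa [mul_assoc aᴴ a t] at h
    have hp : ∀ t, p * (p * t) = (p * p) * t := fun t => (mul_assoc p p t).symm
    have hq : ∀ t, q * (q * t) = (q * q) * t := fun t => (mul_assoc q q t).symm
    have H1 := hrec1 k
    have H2 := hrec2 k
    by_cases hk : Odd k
    · rw [cmvTransfer, if_pos hk, fromBlocks_mul_fromRows] at H1 H2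
      obtain ⟨hU1, hV1⟩ := fromRows_inj H1
      obtain ⟨hU2, hV2⟩ := fromRows_inj H2
      rw [hU1, hV1, hU2, hV2]
      simp only [smul_mul_assoc, mul_assoc, inv_inv]
      exact stmt5.algOdd z hz a p q (q * q) (p * p) _ _ _ _ hpH hqH hp hq haX haY e1 e2
    · rw [cmvTransfer, if_neg hk, fromBlocks_mul_fromRows] at H1 H2
      obtain ⟨hU1, hV1⟩ := fromRows_inj H1
      obtain ⟨hU2, hV2⟩ := fromRows_inj H2
      rw [hU1, hV1, hU2, hV2]
      simp only [mul_assoc]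
      exact stmt5.algEven a p q (q * q) (p * p) _ _ _ _ hpH hqH hp hq haX haY e1 e2
  intro k k'
  let F : ℤ → Matrix (Fin m) (Fin m) ℂ := fun k =>
    ((-1 : ℂ) ^ (k + 1) / 2) • ((U₁ k)ᴴ * U₂ k - (V₁ k)ᴴ * V₂ k)
  have hstep : ∀ k : ℤ, F k = F (k - 1) := by
    intro k
    show ((-1 : ℂ) ^ (k + 1) / 2) • _ = ((-1 : ℂ) ^ ((k - 1) + 1) / 2) • _
    rw [step k]
    have hsgn : ((-1 : ℂ) ^ (k + 1)) = -((-1 : ℂ) ^ ((k - 1) + 1)) := by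
      rw [sub_add_cancel, zpow_add_one₀ (by norm_num : (-1 : ℂ) ≠ 0)]
      ring
    rw [hsgn, neg_div, neg_smul, smul_neg, neg_neg]
  have const : ∀ k : ℤ, F k = F 0 := by
    intro k
    induction k using Int.induction_on with
    | zero => rfl
    | succ i ih =>
      have h := hstep ((i : ℤ) + 1)
      rw [add_sub_cancel_right] at h
      rw [h]; exact ih
    | pred i ih =>
      have h := hstep (-(i : ℤ))
      rw [← h]; exact ih
  show F k = F k'
  rw [const k, const k']
end

section
/- Let α be an m×m complex matrix with ‖α‖ < 1. Then α(I - α*α)^{-1/2} = (I - αα*)^{-1/2} α, and consequently ρ = (I + [g h^{-1}]*[g h^{-1}])^{-1/2} satisfies α = (g h^{-1}) ρ where g h^{-1} = αρ^{-1}; i.e., the map α ↦ αρ^{-1} = α(I-α*α)^{-1/2} from the open unit norm ball of ℂ^{m×m} to ℂ^{m×m} is injective with explicit inverse β ↦ β(I+β*β)^{-1/2}. -/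
open Matrix Polynomial
open scoped Matrix.Norms.L2Operator ComplexOrder

namespace Matrix.PosSemidef
open scoped MatrixOrder

lemma sqrt_eq_CFCsqrt {n : Type*} [Fintype n] [DecidableEq n] {A : Matrix n n ℂ}
    (hA : A.PosSemidef) : hA.sqrt = CFC.sqrt A := by
  rw [CFC.sqrt_eq_real_sqrt A hA.nonneg, cfcₙ_eq_cfc, Matrix.IsHermitian.cfc_eq hA.1]
  rfl

lemma sqrt_mul_self {n : Type*} [Fintype n] [DecidableEq n] {A : Matrix n n ℂ}
    (hA : A.PosSemidef) : hA.sqrt * hA.sqrt = A := by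
  rw [sqrt_eq_CFCsqrt]; exact CFC.sqrt_mul_sqrt_self A hA.nonneg

lemma posSemidef_sqrt {n : Type*} [Fintype n] [DecidableEq n] {A : Matrix n n ℂ}
    (hA : A.PosSemidef) : hA.sqrt.PosSemidef := by
  rw [sqrt_eq_CFCsqrt]; exact (CFC.sqrt_nonneg A).posSemidef

lemma eq_sqrt_of_sq_eq {n : Type*} [Fintype n] [DecidableEq n] {A B : Matrix n n ℂ}
    (hA : A.PosSemidef) (hB : B.PosSemidef) (h : A ^ 2 = B) : A = hB.sqrt := by
  rw [sqrt_eq_CFCsqrt]; subst h; exact (CFC.sqrt_sq A hA.nonneg).symm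

end Matrix.PosSemidef

set_option linter.unusedSectionVars false
set_option maxHeartbeats 1000000

section Helpers
variable {n : Type*} [Fintype n] [DecidableEq n]

variable {n : Type*} [Fintype n] [DecidableEq n]

private lemma aeval_intertwine' {α S T : Matrix n n ℂ} (h : α * S = T * α) (q : ℝ[X]) :
    α * aeval S q = aeval T q * α := by
  induction q using Polynomial.induction_on' with
  | add p q hp hq => simp only [map_add, mul_add, add_mul, hp, hq]
  | monomial k a =>
      have hpow : α * S ^ k = T ^ k * α := by
        induction k with
        | zero => simp
        | succ j ih => rw [pow_succ, pow_succ, ← mul_assoc, ih, mul_assoc, h, ← mul_assoc]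
      rw [aeval_monomial, aeval_monomial, ← mul_assoc, ← Algebra.commutes, mul_assoc, hpow,
        ← mul_assoc, Algebra.commutes, mul_assoc]

private lemma sqrt_eq_cfc' {A : Matrix n n ℂ} (hA : A.PosSemidef) : hA.sqrt = cfc Real.sqrt A := by
  rw [Matrix.IsHermitian.cfc_eq hA.1]
  rfl

private lemma sqrt_intertwine' {α S T : Matrix n n ℂ} (hS : S.PosSemidef) (hT : T.PosSemidef)
    (h : α * S = T * α) : α * hS.sqrt = hT.sqrt * α := by
  classical
  set s : Finset ℝ :=
    ((Matrix.finite_real_spectrum (A := S)).union (Matrix.finite_real_spectrum (A := T))).toFinset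
    with hs
  have hinj : Set.InjOn (id : ℝ → ℝ) s := Function.injective_id.injOn
  set q : ℝ[X] := Lagrange.interpolate s id Real.sqrt with hq
  have heval : ∀ x ∈ s, q.eval x = Real.sqrt x := fun x hx =>
    Lagrange.eval_interpolate_at_node _ hinj hx
  have hSmem : (spectrum ℝ S).EqOn Real.sqrt q.eval := fun x hx =>
    (heval x (by simp only [hs, Set.Finite.mem_toFinset, Set.mem_union]; exact Or.inl hx)).symm
  have hTmem : (spectrum ℝ T).EqOn Real.sqrt q.eval := fun x hx =>
    (heval x (by simp only [hs, Set.Finite.mem_toFinset, Set.mem_union]; exact Or.inr hx)).symm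
  have hSsa : IsSelfAdjoint S := hS.1
  have hTsa : IsSelfAdjoint T := hT.1
  rw [sqrt_eq_cfc' hS, sqrt_eq_cfc' hT, cfc_congr hSmem, cfc_congr hTmem,
    cfc_polynomial q S, cfc_polynomial q T]
  exact aeval_intertwine' h q

private lemma intertwine_inv' {α S T : Matrix n n ℂ} (hS : IsUnit S.det) (hT : IsUnit T.det)
    (h : α * S = T * α) : α * S⁻¹ = T⁻¹ * α :=
  calc α * S⁻¹ = T⁻¹ * T * (α * S⁻¹) := by rw [nonsing_inv_mul _ hT, one_mul]
    _ = T⁻¹ * (T * α) * S⁻¹ := by simp only [mul_assoc]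
    _ = T⁻¹ * (α * S) * S⁻¹ := by rw [h]
    _ = T⁻¹ * α * (S * S⁻¹) := by simp only [mul_assoc]
    _ = T⁻¹ * α := by rw [mul_nonsing_inv _ hS, mul_one]

private lemma dot_eq_sum_sq' (y : n → ℂ) : star y ⬝ᵥ y = ((∑ i, ‖y i‖ ^ 2 : ℝ) : ℂ) := by
  simp only [dotProduct, Pi.star_apply, Complex.star_def]
  push_cast
  congr 1
  ext i
  rw [← Complex.normSq_eq_conj_mul_self]
  simp [Complex.normSq_eq_norm_sq]

private lemma dot_ctm' (A : Matrix n n ℂ) (x : n → ℂ) :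
    star x ⬝ᵥ ((Aᴴ * A) *ᵥ x) = star (A *ᵥ x) ⬝ᵥ (A *ᵥ x) := by
  rw [star_mulVec, ← mulVec_mulVec, dotProduct_mulVec]

private lemma norm_symm_eq' (y : n → ℂ) :
    ‖(EuclideanSpace.equiv n ℂ).symm y‖ = Real.sqrt (∑ i, ‖y i‖ ^ 2) := by
  rw [EuclideanSpace.norm_eq]
  rfl

private lemma sum_sq_mulVec_le' (A : Matrix n n ℂ) (x : n → ℂ) :
    ∑ i, ‖(A *ᵥ x) i‖ ^ 2 ≤ ‖A‖ ^ 2 * ∑ i, ‖x i‖ ^ 2 := by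
  have h := A.l2_opNorm_mulVec ((EuclideanSpace.equiv n ℂ).symm x)
  have hco : (A *ᵥ ((EuclideanSpace.equiv n ℂ).symm x : n → ℂ)) = A *ᵥ x := rfl
  rw [hco, norm_symm_eq', norm_symm_eq'] at h
  have h1 : (Real.sqrt (∑ i, ‖(A *ᵥ x) i‖ ^ 2)) ^ 2 ≤ (‖A‖ * Real.sqrt (∑ i, ‖x i‖ ^ 2)) ^ 2 := by
    apply sq_le_sq' _ h
    have h2 : (0:ℝ) ≤ Real.sqrt (∑ i, ‖(A *ᵥ x) i‖ ^ 2) := Real.sqrt_nonneg _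
    have h3 : (0:ℝ) ≤ ‖A‖ * Real.sqrt (∑ i, ‖x i‖ ^ 2) :=
      mul_nonneg (norm_nonneg A) (Real.sqrt_nonneg _)
    linarith
  rw [Real.sq_sqrt (by positivity), mul_pow, Real.sq_sqrt (by positivity)] at h1
  exact h1

private lemma norm_le_of_sq_bound' (A : Matrix n n ℂ) (c : ℝ) (hc : 0 ≤ c)
    (h : ∀ x : n → ℂ, ∑ i, ‖(A *ᵥ x) i‖ ^ 2 ≤ c ^ 2 * ∑ i, ‖x i‖ ^ 2) : ‖A‖ ≤ c := by
  rw [l2_opNorm_def]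
  apply ContinuousLinearMap.opNorm_le_bound _ hc
  intro x
  have hx := h ((WithLp.equiv 2 _) x)
  have hTx : (Matrix.toEuclideanLin.trans LinearMap.toContinuousLinearMap A) x
      = (EuclideanSpace.equiv n ℂ).symm (A *ᵥ (WithLp.equiv 2 _) x) := rfl
  rw [hTx, norm_symm_eq']
  have hxn : ‖x‖ = Real.sqrt (∑ i, ‖(WithLp.equiv 2 _) x i‖ ^ 2) := by
    rw [EuclideanSpace.norm_eq]; rfl
  rw [hxn]
  calc Real.sqrt (∑ i, ‖(A *ᵥ (WithLp.equiv 2 _) x) i‖ ^ 2)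
      ≤ Real.sqrt (c ^ 2 * ∑ i, ‖(WithLp.equiv 2 _) x i‖ ^ 2) := Real.sqrt_le_sqrt hx
    _ = c * Real.sqrt (∑ i, ‖(WithLp.equiv 2 _) x i‖ ^ 2) := by
        rw [Real.sqrt_mul (by positivity), Real.sqrt_sq hc]

private lemma posDef_of_norm_lt' {α : Matrix n n ℂ} (h : ‖α‖ < 1) : (1 - αᴴ * α).PosDef := by
  refine .of_dotProduct_mulVec_pos ?_ ?_
  · simp [Matrix.IsHermitian, conjTranspose_sub, conjTranspose_mul]
  intro x hx
  have hxa : star x ⬝ᵥ ((1 - αᴴ * α) *ᵥ x)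
      = ((∑ i, ‖x i‖ ^ 2 : ℝ) : ℂ) - ((∑ i, ‖(α *ᵥ x) i‖ ^ 2 : ℝ) : ℂ) := by
    rw [sub_mulVec, dotProduct_sub, one_mulVec, dot_ctm', dot_eq_sum_sq', dot_eq_sum_sq']
  rw [hxa, ← Complex.ofReal_sub, Complex.zero_lt_real]
  have hxpos : 0 < ∑ i, ‖x i‖ ^ 2 := by
    obtain ⟨i, hi⟩ := Function.ne_iff.mp hx
    apply Finset.sum_pos' (fun j _ => by positivity)
    exact ⟨i, Finset.mem_univ i, pow_pos (norm_pos_iff.mpr hi) 2⟩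
  have hb := sum_sq_mulVec_le' α x
  have hα2 : ‖α‖ ^ 2 < 1 := by have := norm_nonneg α; nlinarith
  nlinarith

private lemma posDef_of_psd_isUnit' {M : Matrix n n ℂ} (hM : M.PosSemidef) (h : IsUnit M.det) :
    M.PosDef := by
  refine .of_dotProduct_mulVec_pos hM.1 fun x hx => lt_of_le_of_ne (hM.dotProduct_mulVec_nonneg x) fun heq => hx ?_
  have h0 : M *ᵥ x = 0 := (hM.dotProduct_mulVec_zero_iff x).mp heq.symm
  have hinj : Function.Injective (M.mulVec) := mulVec_injective_iff_isUnit.2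
    (by rwa [← isUnit_iff_isUnit_det] at h)
  have := hinj (a₁ := x) (a₂ := 0) (by simpa using h0)
  simpa using this

private lemma isUnit_det_sqrt' {S : Matrix n n ℂ} (hS : S.PosSemidef) (h : S.PosDef) :
    IsUnit hS.sqrt.det := by
  have hd : hS.sqrt.det * hS.sqrt.det = S.det := by rw [← det_mul, hS.sqrt_mul_self]
  have hne : S.det ≠ 0 := h.det_pos.ne'
  rw [isUnit_iff_ne_zero]
  intro h0
  rw [h0, zero_mul] at hd
  exact hne hd.symm

private lemma posDef_sqrt' {S : Matrix n n ℂ} (hS : S.PosSemidef) (h : S.PosDef) :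
    hS.sqrt.PosDef :=
  posDef_of_psd_isUnit' hS.posSemidef_sqrt (isUnit_det_sqrt' hS h)




lemma part1' {α : Matrix n n ℂ} (h : ‖α‖ < 1)
    (h1 : (1 - αᴴ * α).PosSemidef) (h2 : (1 - α * αᴴ).PosSemidef) :
    α * h1.sqrt⁻¹ = h2.sqrt⁻¹ * α := by
  have hS : (1 - αᴴ * α).PosDef := posDef_of_norm_lt' h
  have hT : (1 - α * αᴴ).PosDef := by
    have := posDef_of_norm_lt' (α := αᴴ) (by rwa [l2_opNorm_conjTranspose])
    simpa using this
  have hcomm : α * (1 - αᴴ * α) = (1 - α * αᴴ) * α := by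
    rw [mul_sub, sub_mul, mul_one, one_mul, mul_assoc]
  have hsq := sqrt_intertwine' h1 h2 hcomm
  exact intertwine_inv' (isUnit_det_sqrt' h1 hS) (isUnit_det_sqrt' h2 hT) hsq

lemma uniq' {β α' : Matrix n n ℂ} (h3 : (1 + βᴴ * β).PosSemidef)
    (hn' : ‖α'‖ < 1) (h1' : (1 - α'ᴴ * α').PosSemidef) (heq : α' * h1'.sqrt⁻¹ = β) :
    α' = β * h3.sqrt⁻¹ := by
  have hS' : (1 - α'ᴴ * α').PosDef := posDef_of_norm_lt' hn'
  set s := h1'.sqrt with hs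
  have hsu : IsUnit s.det := isUnit_det_sqrt' h1' hS'
  have hspd : s.PosDef := posDef_sqrt' h1' hS'
  have hsH : s.IsHermitian := h1'.posSemidef_sqrt.1
  have hsiH : (s⁻¹).IsHermitian := hsH.inv
  have hβ : β = α' * s⁻¹ := heq.symm
  have hαα' : α'ᴴ * α' = 1 - s * s := by
    rw [h1'.sqrt_mul_self, sub_sub_cancel]
  have hββ : βᴴ * β = s⁻¹ * s⁻¹ - 1 := by
    rw [hβ, conjTranspose_mul, hsiH]
    calc s⁻¹ * α'ᴴ * (α' * s⁻¹) = s⁻¹ * (α'ᴴ * α') * s⁻¹ := by simp only [mul_assoc]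
      _ = s⁻¹ * (1 - s * s) * s⁻¹ := by rw [hαα']
      _ = s⁻¹ * s⁻¹ - s⁻¹ * (s * (s * s⁻¹)) := by
          rw [mul_sub, sub_mul, mul_one]; simp only [mul_assoc]
      _ = s⁻¹ * s⁻¹ - 1 := by
          rw [mul_nonsing_inv _ hsu, mul_one, nonsing_inv_mul _ hsu]
  have hsum : 1 + βᴴ * β = s⁻¹ * s⁻¹ := by rw [hββ, add_sub_cancel]
  have hsiPsd : (s⁻¹).PosSemidef := hspd.inv.posSemidef
  have hsqrt3 : s⁻¹ = h3.sqrt :=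
    Matrix.PosSemidef.eq_sqrt_of_sq_eq hsiPsd h3 (by rw [pow_two, hsum])
  rw [← hsqrt3, nonsing_inv_nonsing_inv _ hsu, hβ, mul_assoc, nonsing_inv_mul _ hsu, mul_one]



lemma part2' {β : Matrix n n ℂ} (h3 : (1 + βᴴ * β).PosSemidef) :
    ‖β * h3.sqrt⁻¹‖ < 1 ∧
    ∃ h1 : (1 - (β * h3.sqrt⁻¹)ᴴ * (β * h3.sqrt⁻¹)).PosSemidef,
      (β * h3.sqrt⁻¹) * h1.sqrt⁻¹ = β := by
  classical
  have hPD3 : (1 + βᴴ * β).PosDef :=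
    Matrix.PosDef.add_posSemidef Matrix.PosDef.one (posSemidef_conjTranspose_mul_self β)
  set R := h3.sqrt with hR
  have hRu : IsUnit R.det := isUnit_det_sqrt' h3 hPD3
  have hRpd : R.PosDef := posDef_sqrt' h3 hPD3
  have hRH : R.IsHermitian := h3.posSemidef_sqrt.1
  have hRinvH : (R⁻¹).IsHermitian := hRH.inv
  set α := β * R⁻¹ with hα
  have hαH : αᴴ = R⁻¹ * βᴴ := by rw [hα, conjTranspose_mul, hRinvH]
  have hββ : βᴴ * β = R * R - 1 := by
    rw [h3.sqrt_mul_self]; exact (add_sub_cancel_left 1 (βᴴ * β)).symm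
  have hαα : αᴴ * α = R⁻¹ * (βᴴ * β) * R⁻¹ := by
    rw [hαH, hα]; simp only [mul_assoc]
  have e1 : R⁻¹ * (R * R - 1) * R⁻¹ = 1 - R⁻¹ * R⁻¹ := by
    calc R⁻¹ * (R * R - 1) * R⁻¹ = R⁻¹ * (R * R) * R⁻¹ - R⁻¹ * R⁻¹ := by
          rw [mul_sub, sub_mul, mul_one]
      _ = R⁻¹ * (R * (R * R⁻¹)) - R⁻¹ * R⁻¹ := by simp only [mul_assoc]
      _ = 1 - R⁻¹ * R⁻¹ := by
          rw [mul_nonsing_inv _ hRu, mul_one, nonsing_inv_mul _ hRu]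
  have hkey : 1 - αᴴ * α = R⁻¹ * R⁻¹ := by
    rw [hαα, hββ, e1, sub_sub_cancel]
  have hpsd : (R⁻¹ * R⁻¹).PosSemidef := by
    have := posSemidef_conjTranspose_mul_self (R⁻¹)
    rwa [hRinvH] at this
  have h1 : (1 - αᴴ * α).PosSemidef := by rw [hkey]; exact hpsd
  have hRiPsd : (R⁻¹).PosSemidef := hRpd.inv.posSemidef
  have hsqrt1 : R⁻¹ = h1.sqrt :=
    Matrix.PosSemidef.eq_sqrt_of_sq_eq hRiPsd h1 (by rw [pow_two, hkey])
  have heqβ : α * h1.sqrt⁻¹ = β := by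
    rw [← hsqrt1, nonsing_inv_nonsing_inv _ hRu, hα, mul_assoc, nonsing_inv_mul _ hRu, mul_one]
  refine ⟨?_, h1, heqβ⟩
  -- now the norm bound
  have hident : ∀ x : n → ℂ,
      ∑ i, ‖(α *ᵥ x) i‖ ^ 2 = ∑ i, ‖x i‖ ^ 2 - ∑ i, ‖(R⁻¹ *ᵥ x) i‖ ^ 2 := by
    intro x
    have hαα2 : αᴴ * α = 1 - R⁻¹ * R⁻¹ := by
      rw [← hkey, sub_sub_cancel]
    have hC : ((∑ i, ‖(α *ᵥ x) i‖ ^ 2 : ℝ) : ℂ)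
        = ((∑ i, ‖x i‖ ^ 2 : ℝ) : ℂ) - ((∑ i, ‖(R⁻¹ *ᵥ x) i‖ ^ 2 : ℝ) : ℂ) := by
      rw [← dot_eq_sum_sq', ← dot_eq_sum_sq', ← dot_eq_sum_sq', ← dot_ctm', ← dot_ctm']
      rw [hRinvH, hαα2, sub_mulVec, dotProduct_sub, one_mulVec]
    rw [← Complex.ofReal_sub] at hC
    exact_mod_cast hC
  have hx_le : ∀ x : n → ℂ, ∑ i, ‖x i‖ ^ 2 ≤ ‖R‖ ^ 2 * ∑ i, ‖(R⁻¹ *ᵥ x) i‖ ^ 2 := by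
    intro x
    have := sum_sq_mulVec_le' R (R⁻¹ *ᵥ x)
    rwa [mulVec_mulVec, mul_nonsing_inv _ hRu, one_mulVec] at this
  rcases isEmpty_or_nonempty n with hn | hn
  · have : α = 0 := Subsingleton.elim _ _
    rw [this, norm_zero]; exact one_pos
  · have hRne : R ≠ 0 := by
      intro h0
      rw [h0, det_zero] at hRu
      exact hRu.ne_zero rfl
    have hRpos : (0:ℝ) < ‖R‖ := norm_pos_iff.mpr hRne
    have hR1 : 1 ≤ ‖R‖ ^ 2 := by
      set x₀ : n → ℂ := Pi.single (Classical.arbitrary n) 1 with hx₀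
      have hs0 : ∑ i, ‖x₀ i‖ ^ 2 = 1 := by
        rw [hx₀]
        rw [Fintype.sum_eq_single (Classical.arbitrary n)
          (fun j hj => by simp [Pi.single_apply, hj])]
        simp
      have hnn : (0:ℝ) ≤ ∑ i, ‖(α *ᵥ x₀) i‖ ^ 2 := by positivity
      have h1' := hident x₀
      have h2' := hx_le x₀
      rw [hs0] at h1' h2'
      nlinarith
    have hinvle : (‖R‖ ^ 2)⁻¹ ≤ 1 := by
      rw [inv_le_one_iff₀]; right; exact hR1
    have hinvpos : 0 < (‖R‖ ^ 2)⁻¹ := by positivity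
    set c : ℝ := Real.sqrt (1 - (‖R‖ ^ 2)⁻¹) with hc
    have hcsq : c ^ 2 = 1 - (‖R‖ ^ 2)⁻¹ := Real.sq_sqrt (by linarith)
    have hcnn : 0 ≤ c := Real.sqrt_nonneg _
    have hclt : c < 1 := by nlinarith
    have hbound : ∀ x : n → ℂ, ∑ i, ‖(α *ᵥ x) i‖ ^ 2 ≤ c ^ 2 * ∑ i, ‖x i‖ ^ 2 := by
      intro x
      rw [hcsq]
      have h1' := hident x
      have h2' := hx_le x
      have hmul : (‖R‖ ^ 2)⁻¹ * ‖R‖ ^ 2 = 1 := inv_mul_cancel₀ (by positivity)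
      have h4 : (‖R‖ ^ 2)⁻¹ * ∑ i, ‖x i‖ ^ 2 ≤ ∑ i, ‖(R⁻¹ *ᵥ x) i‖ ^ 2 := by
        have h5 := mul_le_mul_of_nonneg_left h2' hinvpos.le
        rwa [← mul_assoc, hmul, one_mul] at h5
      nlinarith [h4]
    exact lt_of_le_of_lt (norm_le_of_sq_bound' α c hcnn hbound) hclt

end Helpers

/-- For `‖α‖ < 1` one has `α(I-α*α)^{-1/2} = (I-αα*)^{-1/2}α`, and the map
`α ↦ α(I-α*α)^{-1/2}` from the open unit operator-norm ball of `ℂ^{m×m}` to `ℂ^{m×m}` is a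
bijection with explicit inverse `β ↦ β(I+β*β)^{-1/2}`: for every `β` there is a unique `α`
with `‖α‖ < 1` and `α(I-α*α)^{-1/2} = β`, and this `α` equals `β(I+β*β)^{-1/2}`. -/
theorem stmt17 {m : ℕ} :
    (∀ (α : Matrix (Fin m) (Fin m) ℂ), ‖α‖ < 1 →
      ∀ (h1 : (1 - αᴴ * α).PosSemidef) (h2 : (1 - α * αᴴ).PosSemidef),
        α * h1.sqrt⁻¹ = h2.sqrt⁻¹ * α) ∧
    (∀ (β : Matrix (Fin m) (Fin m) ℂ) (h3 : (1 + βᴴ * β).PosSemidef),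
      (∃! α : Matrix (Fin m) (Fin m) ℂ, ‖α‖ < 1 ∧
        ∃ h1 : (1 - αᴴ * α).PosSemidef, α * h1.sqrt⁻¹ = β) ∧
      ‖β * h3.sqrt⁻¹‖ < 1 ∧
      ∃ h1 : (1 - (β * h3.sqrt⁻¹)ᴴ * (β * h3.sqrt⁻¹)).PosSemidef,
        (β * h3.sqrt⁻¹) * h1.sqrt⁻¹ = β) := by
  constructor
  · intro α hα h1 h2
    exact part1' hα h1 h2
  · intro β h3
    obtain ⟨hnorm, h1, heq⟩ := part2' h3
    refine ⟨⟨β * h3.sqrt⁻¹, ⟨hnorm, h1, heq⟩, ?_⟩, hnorm, h1, heq⟩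
    rintro α' ⟨hn', h1', heq'⟩
    exact uniq' h3 hn' h1' heq'
end
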